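/- arXiv:2302.11829 — 2 statements merged into one kernel-verified Lean document; each statement's English description precedes it below -/
import Mathlib

section
/- Assume M_{{1}} ≤ M_{{j}} for all j ∈ [n] and M_{{1}} > M_{[n]}. Let Ĵ = { j ∈ [n] : min_{x∈Δ_m} u^L(x,j) < M_{{1}} } (which is nonempty), fix γ > 0 and β ∈ ℝ, and define ũ^L(x,j) = (u^L(x,j) − β)/γ for j ∈ Ĵ and ũ^L(x,j) = W for j ∉ Ĵ, where W = 1 + max_{i∈[m], ℓ∈Ĵ} (u^L(i,ℓ) − β)/γ. Write M̃_S = max_{x∈Δ_m} min_{j∈S} ũ^L(x,j). Then for any J ⊆ [n] and x* ∈ Δ_m: (u^L(x*,j) = M_J = M_{[n]} for all j ∈ J) if and only if (ũ^L(x*,j) = M̃_J = M̃_{[n]} for all j ∈ J). -/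
open scoped Classical
open Finset

noncomputable section

/-- The leader's mixed-strategy simplex Δ_m. -/
def simplex (m : ℕ) : Set (Fin m → ℝ) := stdSimplex ℝ (Fin m)

/-- Linear extension of a payoff matrix to mixed strategies: u(x,j) = ∑ i, x i * u i j. -/
def pay {m n : ℕ} (u : Fin m → Fin n → ℝ) (x : Fin m → ℝ) (j : Fin n) : ℝ :=
  ∑ i, x i * u i j

/-- Inner product on ℝ^m. -/
def dot {m : ℕ} (a x : Fin m → ℝ) : ℝ := ∑ i, a i * x i

/-- min_{j ∈ S} u(x, j). -/
def minOnS {m n : ℕ} (u : Fin m → Fin n → ℝ) (S : Set (Fin n)) (x : Fin m → ℝ) : ℝ :=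
  sInf ((fun j => pay u x j) '' S)

/-- The leader's maximin value M_S = max_{x∈Δ_m} min_{j∈S} u(x,j). -/
def Mval {m n : ℕ} (u : Fin m → Fin n → ℝ) (S : Set (Fin n)) : ℝ :=
  sSup (minOnS u S '' simplex m)

/-- The set 𝓜_S of maximin strategies. -/
def argMM {m n : ℕ} (u : Fin m → Fin n → ℝ) (S : Set (Fin n)) : Set (Fin m → ℝ) :=
  {x ∈ simplex m | minOnS u S x = Mval u S}

/-- The follower's best-response set BR(x) = argmax_j uF(x,j). -/
def BR {m n : ℕ} (uF : Fin m → Fin n → ℝ) (x : Fin m → ℝ) : Set (Fin n) :=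
  {j | ∀ j', pay uF x j' ≤ pay uF x j}

/-- Strong Stackelberg equilibrium of the game (uL, uF). -/
def SSE {m n : ℕ} (uL uF : Fin m → Fin n → ℝ) (x : Fin m → ℝ) (j : Fin n) : Prop :=
  x ∈ simplex m ∧ j ∈ BR uF x ∧
    ∀ x' ∈ simplex m, ∀ j' ∈ BR uF x', pay uL x' j' ≤ pay uL x j

/-- (x, j) is inducible with respect to the leader payoff uL. -/
def Inducible {m n : ℕ} (uL : Fin m → Fin n → ℝ) (x : Fin m → ℝ) (j : Fin n) : Prop :=
  ∃ uF : Fin m → Fin n → ℝ, SSE uL uF x j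

/-- μ is a (maximin-)cover of S w.r.t. uL: max_{x∈𝓜_S} max_{j∈BR(x)} uL(x,j) < M_S. -/
def IsCover {m n : ℕ} (uL μ : Fin m → Fin n → ℝ) (S : Set (Fin n)) : Prop :=
  ∀ x ∈ argMM uL S, ∀ j ∈ BR μ x, pay uL x j < Mval uL S

/-- μ is a proper cover of S w.r.t. uL. -/
def IsProperCover {m n : ℕ} (uL μ : Fin m → Fin n → ℝ) (S : Set (Fin n)) : Prop :=
  IsCover uL μ S ∧ ∀ x ∈ simplex m, ∀ j ∈ S, j ∉ BR μ x

/-- Ĵ = { j ∈ [n] : min_{x∈Δ_m} u^L(x,j) < M_{1} } (action 1 is j1). -/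
def Jhat {m n : ℕ} (uL : Fin m → Fin n → ℝ) (j1 : Fin n) : Set (Fin n) :=
  {j | sInf ((fun x => pay uL x j) '' simplex m) < Mval uL {j1}}

/-- W = 1 + max_{i∈[m], ℓ∈Ĵ} (u^L(i,ℓ) − β)/γ. -/
def Wval {m n : ℕ} (uL : Fin m → Fin n → ℝ) (j1 : Fin n) (γ β : ℝ) : ℝ :=
  1 + sSup {v : ℝ | ∃ i : Fin m, ∃ ℓ ∈ Jhat uL j1, v = (uL i ℓ - β) / γ}

/-- The strategically equivalent surrogate leader payoff ũ^L:
ũ^L(x,j) = (u^L(x,j) − β)/γ for j ∈ Ĵ and ũ^L(x,j) = W otherwise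
(as a matrix; the linear extension agrees on Δ_m). -/
def tuL15 {m n : ℕ} (uL : Fin m → Fin n → ℝ) (j1 : Fin n) (γ β : ℝ) :
    Fin m → Fin n → ℝ :=
  fun i j => if j ∈ Jhat uL j1 then (uL i j - β) / γ else Wval uL j1 γ β

section helpers

variable {m n : ℕ} {u : Fin m → Fin n → ℝ} {S T : Set (Fin n)} {x : Fin m → ℝ} {j : Fin n}

lemma simplex_ne (hm : 0 < m) : (simplex m).Nonempty :=
  ⟨Pi.single ⟨0, hm⟩ 1, single_mem_stdSimplex ℝ _⟩

lemma pay_continuous (u : Fin m → Fin n → ℝ) (j : Fin n) :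
    Continuous fun x : Fin m → ℝ => pay u x j := by
  unfold pay
  exact continuous_finset_sum _ fun i _ => (continuous_apply i).mul continuous_const

lemma minOn_continuous (hS : S.Nonempty) : Continuous (minOnS u S) := by
  have hne : (Set.toFinite S).toFinset.Nonempty := by
    exact (Set.Finite.toFinset_nonempty _).mpr hS
  have key : minOnS u S = fun x => (Set.toFinite S).toFinset.inf' hne (fun j => pay u x j) := by
    funext x
    rw [Finset.inf'_eq_csInf_image]
    unfold minOnS
    congr 1
    rw [Set.Finite.coe_toFinset]
  rw [key]
  exact Continuous.finset_inf'_apply hne fun i _ => pay_continuous u i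

lemma minOn_le (hj : j ∈ S) : minOnS u S x ≤ pay u x j :=
  csInf_le ((Set.toFinite S).image _).bddBelow ⟨j, hj, rfl⟩

lemma minOn_mem (hS : S.Nonempty) (x : Fin m → ℝ) : ∃ j ∈ S, minOnS u S x = pay u x j := by
  have := Set.Nonempty.csInf_mem (s := (fun j => pay u x j) '' S) (hS.image _)
    ((Set.toFinite S).image _)
  obtain ⟨j, hj, hje⟩ := this
  exact ⟨j, hj, hje.symm⟩

lemma minOn_anti (hST : S ⊆ T) (hS : S.Nonempty) : minOnS u T x ≤ minOnS u S x :=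
  csInf_le_csInf ((Set.toFinite T).image _).bddBelow (hS.image _) (Set.image_mono hST)

lemma Mval_isGreatest (hm : 0 < m) (hS : S.Nonempty) :
    IsGreatest (minOnS u S '' simplex m) (Mval u S) := by
  obtain ⟨x, hx, hmax⟩ := (isCompact_stdSimplex _ _).exists_isMaxOn (simplex_ne hm)
    (minOn_continuous hS).continuousOn
  have hG : IsGreatest (minOnS u S '' simplex m) (minOnS u S x) :=
    ⟨⟨x, hx, rfl⟩, by rintro _ ⟨y, hy, rfl⟩; exact hmax hy⟩
  unfold Mval
  rw [hG.csSup_eq]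
  exact hG

lemma le_Mval (hm : 0 < m) (hS : S.Nonempty) (hx : x ∈ simplex m) :
    minOnS u S x ≤ Mval u S :=
  (Mval_isGreatest hm hS).2 ⟨x, hx, rfl⟩

lemma Mval_attained (hm : 0 < m) (hS : S.Nonempty) :
    ∃ x ∈ simplex m, minOnS u S x = Mval u S := by
  obtain ⟨x, hx, he⟩ := (Mval_isGreatest (u := u) hm hS).1
  exact ⟨x, hx, he⟩

lemma Mval_anti (hm : 0 < m) (hST : S ⊆ T) (hS : S.Nonempty) : Mval u T ≤ Mval u S := by
  obtain ⟨x, hx, he⟩ := Mval_attained (u := u) hm (hS.mono hST)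
  calc Mval u T = minOnS u T x := he.symm
    _ ≤ minOnS u S x := minOn_anti hST hS
    _ ≤ Mval u S := le_Mval hm hS hx

lemma payInf_le (hx : x ∈ simplex m) :
    sInf ((fun x => pay u x j) '' simplex m) ≤ pay u x j :=
  csInf_le ((isCompact_stdSimplex _ _).image (pay_continuous u j)).bddBelow ⟨x, hx, rfl⟩

end helpers

section surrogate

variable {m n : ℕ} {uL : Fin m → Fin n → ℝ} {j1 : Fin n} {γ β : ℝ}
  {S : Set (Fin n)} {x : Fin m → ℝ} {j ℓ : Fin n}

lemma pay_tuL (hγ : 0 < γ) (hx : x ∈ simplex m) (j : Fin n) :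
    pay (tuL15 uL j1 γ β) x j =
      if j ∈ Jhat uL j1 then (pay uL x j - β) / γ else Wval uL j1 γ β := by
  have hs : ∑ i, x i = 1 := hx.2
  unfold pay tuL15
  by_cases h : j ∈ Jhat uL j1
  · simp only [h, if_true]
    have hterm : ∀ i ∈ Finset.univ (α := Fin m),
        x i * ((uL i j - β) / γ) = x i * uL i j / γ - x i * β / γ := by
      intro i _; field_simp
    rw [Finset.sum_congr rfl hterm, Finset.sum_sub_distrib, ← Finset.sum_div, ← Finset.sum_div,
      ← Finset.sum_mul, hs, one_mul, div_sub_div_same]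
  · simp only [h, if_false]
    rw [← Finset.sum_mul, hs, one_mul]

lemma le_Wval_sub_one (i : Fin m) (hℓ : ℓ ∈ Jhat uL j1) :
    (uL i ℓ - β) / γ ≤ Wval uL j1 γ β - 1 := by
  have hfin : {v : ℝ | ∃ i : Fin m, ∃ ℓ ∈ Jhat uL j1, v = (uL i ℓ - β) / γ}.Finite := by
    apply Set.Finite.subset (Set.finite_range fun p : Fin m × Fin n => (uL p.1 p.2 - β) / γ)
    rintro v ⟨i, ℓ, -, rfl⟩
    exact ⟨(i, ℓ), rfl⟩
  have := le_csSup hfin.bddAbove (show (uL i ℓ - β) / γ ∈ _ from ⟨i, ℓ, hℓ, rfl⟩)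
  unfold Wval
  linarith

lemma pay_tuL_le (hγ : 0 < γ) (hx : x ∈ simplex m) (hj : j ∈ Jhat uL j1) :
    pay (tuL15 uL j1 γ β) x j ≤ Wval uL j1 γ β - 1 := by
  set W := Wval uL j1 γ β with hW
  have hb : ∀ i, uL i j ≤ γ * (W - 1) + β := by
    intro i
    have h1 := le_Wval_sub_one (γ := γ) (β := β) i hj
    rw [div_le_iff₀ hγ] at h1
    linarith
  have hpb : pay uL x j ≤ γ * (W - 1) + β := by
    calc pay uL x j = ∑ i, x i * uL i j := rfl
      _ ≤ ∑ i, x i * (γ * (W - 1) + β) :=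
          Finset.sum_le_sum fun i _ => mul_le_mul_of_nonneg_left (hb i) (hx.1 i)
      _ = γ * (W - 1) + β := by rw [← Finset.sum_mul, hx.2, one_mul]
  rw [pay_tuL hγ hx, if_pos hj, div_le_iff₀ hγ]
  linarith

lemma minOn_tuL_univ (hγ : 0 < γ) (hJne : (Jhat uL j1).Nonempty) (hx : x ∈ simplex m) :
    minOnS (tuL15 uL j1 γ β) Set.univ x = minOnS (tuL15 uL j1 γ β) (Jhat uL j1) x := by
  apply le_antisymm (minOn_anti (Set.subset_univ _) hJne)
  obtain ⟨j, -, hje⟩ := minOn_mem (u := tuL15 uL j1 γ β) (⟨j1, Set.mem_univ j1⟩) x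
  rw [hje]
  by_cases h : j ∈ Jhat uL j1
  · exact minOn_le h
  · obtain ⟨ℓ, hℓ⟩ := hJne
    calc minOnS (tuL15 uL j1 γ β) (Jhat uL j1) x ≤ pay (tuL15 uL j1 γ β) x ℓ := minOn_le hℓ
      _ ≤ Wval uL j1 γ β - 1 := pay_tuL_le hγ hx hℓ
      _ ≤ Wval uL j1 γ β := by linarith
      _ = pay (tuL15 uL j1 γ β) x j := by rw [pay_tuL hγ hx, if_neg h]

lemma minOn_tuL_sub (hγ : 0 < γ) (hSJ : S ⊆ Jhat uL j1) (hS : S.Nonempty)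
    (hx : x ∈ simplex m) :
    minOnS (tuL15 uL j1 γ β) S x = (minOnS uL S x - β) / γ := by
  apply le_antisymm
  · obtain ⟨j, hj, hje⟩ := minOn_mem (u := uL) hS x
    calc minOnS (tuL15 uL j1 γ β) S x ≤ pay (tuL15 uL j1 γ β) x j := minOn_le hj
      _ = (pay uL x j - β) / γ := by rw [pay_tuL hγ hx, if_pos (hSJ hj)]
      _ = (minOnS uL S x - β) / γ := by rw [hje]
  · obtain ⟨j, hj, hje⟩ := minOn_mem (u := tuL15 uL j1 γ β) hS x
    rw [hje, pay_tuL hγ hx, if_pos (hSJ hj)]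
    exact div_le_div_of_nonneg_right (sub_le_sub_right (minOn_le hj) β) hγ.le

lemma Mval_tuL_sub (hγ : 0 < γ) (hm : 0 < m) (hSJ : S ⊆ Jhat uL j1) (hS : S.Nonempty) :
    Mval (tuL15 uL j1 γ β) S = (Mval uL S - β) / γ := by
  have hG2 : IsGreatest (minOnS (tuL15 uL j1 γ β) S '' simplex m) ((Mval uL S - β) / γ) := by
    constructor
    · obtain ⟨x, hx, he⟩ := Mval_attained (u := uL) hm hS
      exact ⟨x, hx, by rw [minOn_tuL_sub hγ hSJ hS hx, he]⟩
    · rintro _ ⟨y, hy, rfl⟩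
      rw [minOn_tuL_sub hγ hSJ hS hy]
      exact div_le_div_of_nonneg_right (sub_le_sub_right (le_Mval hm hS hy) β) hγ.le
  exact hG2.csSup_eq

lemma Mval_tuL_univ (hγ : 0 < γ) (hm : 0 < m) (hJne : (Jhat uL j1).Nonempty) :
    Mval (tuL15 uL j1 γ β) Set.univ = (Mval uL (Jhat uL j1) - β) / γ := by
  have hG2 : IsGreatest (minOnS (tuL15 uL j1 γ β) Set.univ '' simplex m)
      ((Mval uL (Jhat uL j1) - β) / γ) := by
    constructor
    · obtain ⟨x, hx, he⟩ := Mval_attained (u := uL) hm hJne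
      refine ⟨x, hx, ?_⟩
      rw [minOn_tuL_univ hγ hJne hx, minOn_tuL_sub hγ (le_refl _) hJne hx, he]
    · rintro _ ⟨y, hy, rfl⟩
      rw [minOn_tuL_univ hγ hJne hy, minOn_tuL_sub hγ (le_refl _) hJne hy]
      exact div_le_div_of_nonneg_right (sub_le_sub_right (le_Mval hm hJne hy) β) hγ.le
  exact hG2.csSup_eq

end surrogate

/-- Ĵ is nonempty, and for any J ⊆ [n] and x* ∈ Δ_m,
(u^L(x*,j) = M_J = M_{[n]} for all j ∈ J) iff (ũ^L(x*,j) = M̃_J = M̃_{[n]} for all j ∈ J). -/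
theorem surrogate_equivalence {m n : ℕ} (hm : 0 < m)
    (uL : Fin m → Fin n → ℝ) (j1 : Fin n)
    (hmin1 : ∀ j : Fin n, Mval uL {j1} ≤ Mval uL {j})
    (hM1 : Mval uL Set.univ < Mval uL {j1})
    (γ : ℝ) (hγ : 0 < γ) (β : ℝ) :
    (Jhat uL j1).Nonempty ∧
    ∀ (J : Set (Fin n)) (xstar : Fin m → ℝ), xstar ∈ simplex m →
      ((∀ j ∈ J, pay uL xstar j = Mval uL J ∧ Mval uL J = Mval uL Set.univ) ↔
        (∀ j ∈ J, pay (tuL15 uL j1 γ β) xstar j = Mval (tuL15 uL j1 γ β) J ∧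
          Mval (tuL15 uL j1 γ β) J = Mval (tuL15 uL j1 γ β) Set.univ)) := by
  have huniv : (Set.univ : Set (Fin n)).Nonempty := ⟨j1, Set.mem_univ j1⟩
  have hJne : (Jhat uL j1).Nonempty := by
    obtain ⟨x1, hx1, -⟩ := Mval_attained (u := uL) hm (Set.singleton_nonempty j1)
    obtain ⟨j, -, hje⟩ := minOn_mem (u := uL) huniv x1
    have h1 : pay uL x1 j ≤ Mval uL Set.univ := hje ▸ le_Mval hm huniv hx1
    have h2 : pay uL x1 j < Mval uL {j1} := lt_of_le_of_lt h1 hM1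
    exact ⟨j, lt_of_le_of_lt (payInf_le hx1) h2⟩
  have hMJhat : Mval uL (Jhat uL j1) = Mval uL Set.univ := by
    refine le_antisymm ?_ (Mval_anti hm (Set.subset_univ _) hJne)
    obtain ⟨x, hx, he⟩ := Mval_attained (u := uL) hm hJne
    obtain ⟨j, -, hje⟩ := minOn_mem (u := uL) huniv x
    by_cases h : j ∈ Jhat uL j1
    · calc Mval uL (Jhat uL j1) = minOnS uL (Jhat uL j1) x := he.symm
        _ ≤ pay uL x j := minOn_le h
        _ = minOnS uL Set.univ x := hje.symm
        _ ≤ Mval uL Set.univ := le_Mval hm huniv hx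
    · exfalso
      have hge : Mval uL {j1} ≤ sInf ((fun x => pay uL x j) '' simplex m) := not_lt.mp h
      have h3 : Mval uL {j1} ≤ pay uL x j := le_trans hge (payInf_le hx)
      have h4 : Mval uL {j1} ≤ minOnS uL Set.univ x := hje ▸ h3
      have h5 := le_trans h4 (le_Mval hm huniv hx)
      exact absurd h5 (not_le.mpr hM1)
  refine ⟨hJne, ?_⟩
  intro J xstar hxs
  rcases Set.eq_empty_or_nonempty J with rfl | hJ
  · simp
  have hMuniv_t : Mval (tuL15 uL j1 γ β) Set.univ = (Mval uL Set.univ - β) / γ := by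
    rw [Mval_tuL_univ hγ hm hJne, hMJhat]
  constructor
  · intro h
    have hJsub : J ⊆ Jhat uL j1 := by
      intro j hj
      obtain ⟨h1, h2⟩ := h j hj
      have h3 : pay uL xstar j < Mval uL {j1} := by rw [h1, h2]; exact hM1
      exact lt_of_le_of_lt (payInf_le hxs) h3
    have hMJ_t : Mval (tuL15 uL j1 γ β) J = (Mval uL J - β) / γ :=
      Mval_tuL_sub hγ hm hJsub hJ
    intro j hj
    obtain ⟨h1, h2⟩ := h j hj
    constructor
    · rw [pay_tuL hγ hxs, if_pos (hJsub hj), h1, hMJ_t]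
    · rw [hMJ_t, hMuniv_t, h2]
  · intro h
    have hWlt : Mval (tuL15 uL j1 γ β) Set.univ ≤ Wval uL j1 γ β - 1 := by
      obtain ⟨ℓ, hℓ⟩ := hJne
      obtain ⟨x, hx, he⟩ := Mval_attained (u := tuL15 uL j1 γ β) hm huniv
      calc Mval (tuL15 uL j1 γ β) Set.univ = minOnS (tuL15 uL j1 γ β) Set.univ x := he.symm
        _ ≤ pay (tuL15 uL j1 γ β) x ℓ := minOn_le (Set.mem_univ ℓ)
        _ ≤ Wval uL j1 γ β - 1 := pay_tuL_le hγ hx hℓ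
    have hJsub : J ⊆ Jhat uL j1 := by
      intro j hj
      by_contra hcon
      obtain ⟨h1, h2⟩ := h j hj
      rw [pay_tuL hγ hxs, if_neg hcon] at h1
      have hWeq : Wval uL j1 γ β = Mval (tuL15 uL j1 γ β) Set.univ := h1.trans h2
      linarith [hWeq ▸ hWlt]
    have hMJ_t : Mval (tuL15 uL j1 γ β) J = (Mval uL J - β) / γ :=
      Mval_tuL_sub hγ hm hJsub hJ
    intro j hj
    obtain ⟨h1, h2⟩ := h j hj
    rw [pay_tuL hγ hxs, if_pos (hJsub hj), hMJ_t] at h1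
    rw [hMJ_t, hMuniv_t] at h2
    have hγ' : γ ≠ 0 := hγ.ne'
    constructor
    · field_simp at h1; linarith
    · field_simp at h2; linarith
end
end

section
/- Assume n ≥ 2, M_{{1}} ≤ M_{{2}}, min_{x∈Δ_m} u^L(x,2) < M_{{1}}, that for j ∈ {1,2} there are a_j ∈ ℝ^m, γ_j > 0, β_j ∈ ℝ with u^L(x,j) = γ_j·(a_j·x) + β_j for all x ∈ Δ_m, that a_1 is not constant (a_{1,i} ≠ a_{1,k} for some i,k ∈ [m]), and that there exists i ∈ argmax_{i'∈[m]} u^L(i',2) with u^L(i,2) > u^L(i,1). Set d_j* = (M_{{1,2}} − β_j)/γ_j, P₁(d₁,d₂) = {x ∈ Δ_m : a_2·x ≥ d₂ and a_1·x ≤ d₁}, P₂(d₁,d₂) = {x ∈ Δ_m : a_2·x ≤ d₂}. Then there exists ε > 0 such that P₁(d₁*−ε, d₂*) ≠ ∅ and P₂(d₁*, d₂*−ε) ≠ ∅; consequently P₁(d₁,d₂) ≠ ∅ and P₂(d₁,d₂) ≠ ∅ for all d₁ ∈ [d₁*−ε, d₁*] and d₂ ∈ [d₂*−ε, d₂*].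 -/
open scoped Classical
open Finset

noncomputable section

/-- P₁(d₁,d₂) = {x ∈ Δ_m : a₂·x ≥ d₂ and a₁·x ≤ d₁}. -/
def P1 {m : ℕ} (a1 a2 : Fin m → ℝ) (d1 d2 : ℝ) : Set (Fin m → ℝ) :=
  {x ∈ simplex m | d2 ≤ dot a2 x ∧ dot a1 x ≤ d1}

/-- P₂(d₁,d₂) = {x ∈ Δ_m : a₂·x ≤ d₂}. -/
def P2 {m : ℕ} (a2 : Fin m → ℝ) (d2 : ℝ) : Set (Fin m → ℝ) :=
  {x ∈ simplex m | dot a2 x ≤ d2}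

section helpers
variable {m n : ℕ}

lemma vertex_mem (i : Fin m) : (Pi.single i 1 : Fin m → ℝ) ∈ simplex m := by
  constructor
  · intro k
    rcases eq_or_ne k i with rfl | h
    · simp
    · simp [Pi.single_apply, h]
  · simp [Pi.single_apply]

lemma pay_vertex (u : Fin m → Fin n → ℝ) (i : Fin m) (j : Fin n) :
    pay u (Pi.single i 1) j = u i j := by
  simp [pay, Pi.single_apply, Finset.sum_ite_eq', ite_mul]

lemma dot_vertex (a : Fin m → ℝ) (i : Fin m) :
    dot a (Pi.single i 1) = a i := by
  simp [dot, Pi.single_apply, Finset.sum_ite_eq', mul_ite]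

lemma combo_mem {x y : Fin m → ℝ} (hx : x ∈ simplex m) (hy : y ∈ simplex m)
    {t : ℝ} (h0 : 0 ≤ t) (h1 : t ≤ 1) :
    (fun k => (1-t)*x k + t*y k) ∈ simplex m := by
  constructor
  · intro k
    have h1' := hx.1 k; have h2' := hy.1 k
    have : (0:ℝ) ≤ (1-t)*x k + t*y k := by nlinarith
    exact this
  · have hx2 := hx.2; have hy2 := hy.2
    simp only [Finset.sum_add_distrib, ← Finset.mul_sum]
    rw [hx2, hy2]; ring

lemma pay_combo (u : Fin m → Fin n → ℝ) (x y : Fin m → ℝ) (t : ℝ) (j : Fin n) :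
    pay u (fun k => (1-t)*x k + t*y k) j = (1-t)*pay u x j + t*pay u y j := by
  simp only [pay, add_mul, Finset.sum_add_distrib, ← Finset.mul_sum, mul_assoc]

lemma pay_le_of_colmax {u : Fin m → Fin n → ℝ} {x : Fin m → ℝ} (hx : x ∈ simplex m)
    {j : Fin n} {i1 : Fin m} (hmax : ∀ i', u i' j ≤ u i1 j) :
    pay u x j ≤ u i1 j := by
  calc pay u x j ≤ ∑ i, x i * u i1 j := by
        apply Finset.sum_le_sum
        intro i _
        exact mul_le_mul_of_nonneg_left (hmax i) (hx.1 i)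
    _ = u i1 j := by rw [← Finset.sum_mul, hx.2, one_mul]

lemma colmin_le_pay {u : Fin m → Fin n → ℝ} {x : Fin m → ℝ} (hx : x ∈ simplex m)
    {j : Fin n} {c : ℝ} (hmin : ∀ i', c ≤ u i' j) :
    c ≤ pay u x j := by
  calc c = ∑ i, x i * c := by rw [← Finset.sum_mul, hx.2, one_mul]
    _ ≤ pay u x j := by
        apply Finset.sum_le_sum
        intro i _
        exact mul_le_mul_of_nonneg_left (hmin i) (hx.1 i)

lemma minOn_pair (u : Fin m → Fin n → ℝ) (x : Fin m → ℝ) (j1 j2 : Fin n) :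
    minOnS u {j1, j2} x = min (pay u x j1) (pay u x j2) := by
  rw [minOnS, Set.image_pair, csInf_pair]

lemma minOn_single (u : Fin m → Fin n → ℝ) (x : Fin m → ℝ) (j : Fin n) :
    minOnS u {j} x = pay u x j := by
  rw [minOnS, Set.image_singleton, csInf_singleton]

end helpers

section mvals
variable {m n : ℕ}

lemma bdd_pair {u : Fin m → Fin n → ℝ} {j1 j2 : Fin n} {i1 : Fin m}
    (hi1 : ∀ i', u i' j1 ≤ u i1 j1) :
    BddAbove (minOnS u {j1, j2} '' simplex m) := by
  refine ⟨u i1 j1, ?_⟩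
  rintro v ⟨y, hy, rfl⟩
  rw [minOn_pair]
  exact le_trans (min_le_left _ _) (pay_le_of_colmax hy hi1)

lemma bdd_single {u : Fin m → Fin n → ℝ} {j : Fin n} {i1 : Fin m}
    (hi1 : ∀ i', u i' j ≤ u i1 j) :
    BddAbove (minOnS u {j} '' simplex m) := by
  refine ⟨u i1 j, ?_⟩
  rintro v ⟨y, hy, rfl⟩
  rw [minOn_single]
  exact pay_le_of_colmax hy hi1

lemma minOn_le_Mpair {u : Fin m → Fin n → ℝ} {j1 j2 : Fin n} {i1 : Fin m}
    (hi1 : ∀ i', u i' j1 ≤ u i1 j1) {x : Fin m → ℝ} (hx : x ∈ simplex m) :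
    minOnS u {j1, j2} x ≤ Mval u {j1, j2} :=
  le_csSup (bdd_pair hi1) (Set.mem_image_of_mem _ hx)

lemma Mval_single_eq {u : Fin m → Fin n → ℝ} {j : Fin n} {i1 : Fin m}
    (hi1 : ∀ i', u i' j ≤ u i1 j) : Mval u {j} = u i1 j := by
  apply le_antisymm
  · apply csSup_le ⟨_, Set.mem_image_of_mem _ (vertex_mem i1)⟩
    rintro v ⟨y, hy, rfl⟩
    rw [minOn_single]
    exact pay_le_of_colmax hy hi1
  · rw [← pay_vertex u i1 j, ← minOn_single]
    exact le_csSup (bdd_single hi1) (Set.mem_image_of_mem _ (vertex_mem i1))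

lemma Mpair_le_M1 {u : Fin m → Fin n → ℝ} {j1 j2 : Fin n} {i1 : Fin m}
    (hi1 : ∀ i', u i' j1 ≤ u i1 j1) :
    Mval u {j1, j2} ≤ Mval u {j1} := by
  apply csSup_le ⟨_, Set.mem_image_of_mem _ (vertex_mem i1)⟩
  rintro v ⟨y, hy, rfl⟩
  rw [minOn_pair]
  calc min (pay u y j1) (pay u y j2) ≤ pay u y j1 := min_le_left _ _
    _ = minOnS u {j1} y := (minOn_single u y j1).symm
    _ ≤ Mval u {j1} := le_csSup (bdd_single hi1) (Set.mem_image_of_mem _ hy)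

lemma c_le_Mpair {u : Fin m → Fin n → ℝ} {j1 j2 : Fin n} {i i1 : Fin m}
    (hi1 : ∀ i', u i' j1 ≤ u i1 j1) (hlt : u i j1 ≤ u i j2) :
    u i j1 ≤ Mval u {j1, j2} := by
  have h := minOn_le_Mpair hi1 (vertex_mem i) (j2 := j2)
  rwa [minOn_pair, pay_vertex, pay_vertex, min_eq_left hlt] at h

end mvals

lemma keyB {m n : ℕ} (hm : 0 < m) (uL : Fin m → Fin n → ℝ) (j1 j2 : Fin n)
    (hM : Mval uL {j1} ≤ Mval uL {j2})
    (hmin : sInf ((fun x => pay uL x j2) '' simplex m) < Mval uL {j1})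
    (i : Fin m) (hdomle : ∀ i', uL i' j2 ≤ uL i j2) (hdomlt : uL i j1 < uL i j2)
    (i1 : Fin m) (hi1 : ∀ i', uL i' j1 ≤ uL i1 j1) :
    ∃ y ∈ simplex m, pay uL y j2 < Mval uL {j1, j2} := by
  set M := Mval uL {j1, j2} with hMdef
  by_contra hcon
  push_neg at hcon
  have hM1 : M ≤ Mval uL {j1} := Mpair_le_M1 hi1
  rcases eq_or_lt_of_le hM1 with heq | hlt
  · obtain ⟨v, ⟨y, hy, rfl⟩, hv⟩ :=
      exists_lt_of_csInf_lt ⟨_, Set.mem_image_of_mem _ (vertex_mem ⟨0, hm⟩)⟩ hmin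
    exact absurd (hcon y hy) (not_le.mpr (by rw [heq]; exact hv))
  · set M1 := Mval uL {j1} with hM1def
    set c := uL i j1 with hcdef
    have hcM : c ≤ M := c_le_Mpair hi1 hdomlt.le
    have hcM1 : c < M1 := lt_of_le_of_lt hcM hlt
    set t := (M1 - M) / (2 * (M1 - c)) with htdef
    have ht0 : 0 < t := div_pos (by linarith) (by linarith)
    have hne : M1 - c ≠ 0 := by linarith
    have htc : t * (M1 - c) = (M1 - M) / 2 := by
      rw [htdef]; field_simp
    have ht1 : t ≤ 1 := by nlinarith
    set z := fun k => (1 - t) * (Pi.single i1 1 : Fin m → ℝ) k +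
      t * (Pi.single i 1 : Fin m → ℝ) k with hzdef
    have hz : z ∈ simplex m := combo_mem (vertex_mem i1) (vertex_mem i) ht0.le ht1
    have hM1i1 : M1 = uL i1 j1 := Mval_single_eq hi1
    have hM2i : Mval uL {j2} = uL i j2 := Mval_single_eq hdomle
    have hp1 : pay uL z j1 = (1 - t) * uL i1 j1 + t * c := by
      rw [hzdef, pay_combo, pay_vertex, pay_vertex]
    have hp2 : pay uL z j2 = (1 - t) * uL i1 j2 + t * uL i j2 := by
      rw [hzdef, pay_combo, pay_vertex, pay_vertex]
    have hq : M ≤ uL i1 j2 := by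
      have h := hcon _ (vertex_mem i1)
      rwa [pay_vertex] at h
    have h1gt : M < pay uL z j1 := by rw [hp1, ← hM1i1]; nlinarith
    have h2gt : M < pay uL z j2 := by
      rw [hp2]
      have hMi2 : M1 ≤ uL i j2 := by rw [← hM2i]; exact hM
      nlinarith
    have hle := minOn_le_Mpair (j2 := j2) hi1 hz
    rw [minOn_pair] at hle
    exact absurd hle (not_le.mpr (lt_min h1gt h2gt))

lemma keyA {m n : ℕ} (uL : Fin m → Fin n → ℝ) (j1 j2 : Fin n)
    (hM : Mval uL {j1} ≤ Mval uL {j2})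
    (i : Fin m) (hdomle : ∀ i', uL i' j2 ≤ uL i j2) (hdomlt : uL i j1 < uL i j2)
    (i1 : Fin m) (hi1 : ∀ i', uL i' j1 ≤ uL i1 j1)
    (r : Fin m) (hr : ∀ i', uL r j1 ≤ uL i' j1)
    (hcol : ∃ k k', uL k j1 ≠ uL k' j1) :
    ∃ x ∈ simplex m, Mval uL {j1, j2} ≤ pay uL x j2 ∧ pay uL x j1 < Mval uL {j1, j2} := by
  set M := Mval uL {j1, j2} with hMdef
  have hM1 : M ≤ Mval uL {j1} := Mpair_le_M1 hi1
  have hM1i1 : Mval uL {j1} = uL i1 j1 := Mval_single_eq hi1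
  have hM2i : Mval uL {j2} = uL i j2 := Mval_single_eq hdomle
  have hcM : uL i j1 ≤ M := c_le_Mpair hi1 hdomlt.le
  rcases eq_or_lt_of_le hcM with hceq | hclt
  · -- uL i j1 = M
    have hM2gt : M < uL i j2 := by rw [← hceq]; exact hdomlt
    rcases lt_or_ge (uL r j1) M with hrlt | hrge
    · -- mix e_i and e_r
      set D := uL i j2 - uL r j2 with hDdef
      set s := uL i j2 - M with hsdef
      have hD0 : 0 ≤ D := by have := hdomle r; simp [hDdef]; linarith
      have hs0 : 0 < s := by simp [hsdef]; linarith
      set t := s / (D + s) with htdef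
      have hden : 0 < D + s := by linarith
      have ht0 : 0 < t := div_pos hs0 hden
      have ht1 : t ≤ 1 := by rw [htdef, div_le_one hden]; linarith
      have hts : t * (D + s) = s := by rw [htdef]; field_simp
      set z := fun k => (1 - t) * (Pi.single i 1 : Fin m → ℝ) k +
        t * (Pi.single r 1 : Fin m → ℝ) k with hzdef
      have hz : z ∈ simplex m := combo_mem (vertex_mem i) (vertex_mem r) ht0.le ht1
      have hp1 : pay uL z j1 = (1 - t) * uL i j1 + t * uL r j1 := by
        rw [hzdef, pay_combo, pay_vertex, pay_vertex]
      have hp2 : pay uL z j2 = (1 - t) * uL i j2 + t * uL r j2 := by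
        rw [hzdef, pay_combo, pay_vertex, pay_vertex]
      refine ⟨z, hz, ?_, ?_⟩
      · rw [hp2]; nlinarith
      · rw [hp1]; nlinarith
    · -- all column-j1 entries ≥ M: contradiction
      exfalso
      have hlow : ∀ k, M ≤ uL k j1 := fun k => le_trans hrge (hr k)
      obtain ⟨k, k', hkk⟩ := hcol
      have hM1gt : M < uL i1 j1 := by
        rcases lt_or_ge M (uL i1 j1) with h | h
        · exact h
        · have hall : ∀ k0, uL k0 j1 = M :=
            fun k0 => le_antisymm (le_trans (hi1 k0) h) (hlow k0)
          exact absurd (by rw [hall k, hall k']) hkk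
      have hq : pay uL (Pi.single i1 1) j2 ≤ M := by
        have hmin' := minOn_le_Mpair (j2 := j2) hi1 (vertex_mem i1)
        rw [minOn_pair, pay_vertex] at hmin'
        by_contra hq'
        push_neg at hq'
        exact absurd hmin' (not_le.mpr (lt_min hM1gt hq'))
      set q := pay uL (Pi.single i1 1) j2 with hqdef
      set s := (uL i j2 - M) / 2 with hsdef
      have hs0 : 0 < s := by rw [hsdef]; linarith
      have hden : 0 < uL i j2 - q := by linarith
      set t := 1 - s / (uL i j2 - q) with htdef
      have hfrac : (1 - t) * (uL i j2 - q) = s := by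
        rw [htdef]; field_simp; ring
      have ht1 : t ≤ 1 := by
        rw [htdef]; have : 0 ≤ s / (uL i j2 - q) := le_of_lt (div_pos hs0 hden); linarith
      have ht1' : t < 1 := by
        rw [htdef]; have : 0 < s / (uL i j2 - q) := div_pos hs0 hden; linarith
      have ht0 : 0 ≤ t := by
        rw [htdef]
        have h2s : 2 * s ≤ uL i j2 - q := by rw [hsdef]; linarith
        have : s / (uL i j2 - q) ≤ 1 := by
          rw [div_le_one hden]; linarith
        linarith
      set z := fun k => (1 - t) * (Pi.single i1 1 : Fin m → ℝ) k +
        t * (Pi.single i 1 : Fin m → ℝ) k with hzdef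
      have hz : z ∈ simplex m := combo_mem (vertex_mem i1) (vertex_mem i) ht0 ht1
      have hp1 : pay uL z j1 = (1 - t) * uL i1 j1 + t * uL i j1 := by
        rw [hzdef, pay_combo, pay_vertex, pay_vertex]
      have hp2 : pay uL z j2 = (1 - t) * q + t * uL i j2 := by
        rw [hzdef, pay_combo, pay_vertex uL i j2, hqdef]
      have h1gt : M < pay uL z j1 := by rw [hp1, ← hceq]; nlinarith
      have h2gt : M < pay uL z j2 := by rw [hp2]; nlinarith
      have hle := minOn_le_Mpair (j2 := j2) hi1 hz
      rw [minOn_pair] at hle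
      exact absurd hle (not_le.mpr (lt_min h1gt h2gt))
  · -- uL i j1 < M: use vertex e_i
    refine ⟨Pi.single i 1, vertex_mem i, ?_, ?_⟩
    · rw [pay_vertex, ← hM2i]; exact le_trans hM1 hM
    · rw [pay_vertex]; exact hclt

/-- there exists ε > 0 with P₁(d₁*−ε, d₂*) ≠ ∅ and P₂(d₁*, d₂*−ε) ≠ ∅;
consequently P₁(d₁,d₂) ≠ ∅ and P₂(d₁,d₂) ≠ ∅ for all d₁ ∈ [d₁*−ε, d₁*] and
d₂ ∈ [d₂*−ε, d₂*]. (Actions 1, 2 are j1, j2.) -/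
theorem Pj_nonempty_strip {m n : ℕ} (hm : 0 < m)
    (uL : Fin m → Fin n → ℝ) (j1 j2 : Fin n) (hj : j1 ≠ j2)
    (hM : Mval uL {j1} ≤ Mval uL {j2})
    (hmin : sInf ((fun x => pay uL x j2) '' simplex m) < Mval uL {j1})
    (a1 a2 : Fin m → ℝ) (γ1 γ2 : ℝ) (hγ1 : 0 < γ1) (hγ2 : 0 < γ2) (β1 β2 : ℝ)
    (h1 : ∀ x ∈ simplex m, pay uL x j1 = γ1 * dot a1 x + β1)
    (h2 : ∀ x ∈ simplex m, pay uL x j2 = γ2 * dot a2 x + β2)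
    (ha1 : ∃ i k : Fin m, a1 i ≠ a1 k)
    (hdom : ∃ i : Fin m, (∀ i' : Fin m, uL i' j2 ≤ uL i j2) ∧ uL i j1 < uL i j2) :
    ∃ ε : ℝ, 0 < ε ∧
      (P1 a1 a2 ((Mval uL {j1, j2} - β1) / γ1 - ε) ((Mval uL {j1, j2} - β2) / γ2)).Nonempty ∧
      (P2 a2 ((Mval uL {j1, j2} - β2) / γ2 - ε)).Nonempty ∧
      ∀ d1 : ℝ, (Mval uL {j1, j2} - β1) / γ1 - ε ≤ d1 → d1 ≤ (Mval uL {j1, j2} - β1) / γ1 →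
        ∀ d2 : ℝ, (Mval uL {j1, j2} - β2) / γ2 - ε ≤ d2 → d2 ≤ (Mval uL {j1, j2} - β2) / γ2 →
          (P1 a1 a2 d1 d2).Nonempty ∧ (P2 a2 d2).Nonempty := by
  obtain ⟨i, hdomle, hdomlt⟩ := hdom
  obtain ⟨i1, -, hi1⟩ := Finset.exists_max_image Finset.univ (fun i' => uL i' j1)
    ⟨⟨0, hm⟩, Finset.mem_univ _⟩
  obtain ⟨r, -, hr⟩ := Finset.exists_min_image Finset.univ (fun i' => uL i' j1)
    ⟨⟨0, hm⟩, Finset.mem_univ _⟩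
  simp only [Finset.mem_univ, forall_true_left] at hi1 hr
  have hi1' : ∀ i', uL i' j1 ≤ uL i1 j1 := hi1
  have hr' : ∀ i', uL r j1 ≤ uL i' j1 := hr
  have hcol : ∃ k k', uL k j1 ≠ uL k' j1 := by
    obtain ⟨k, k', hkk⟩ := ha1
    refine ⟨k, k', fun h => hkk ?_⟩
    have e1 : uL k j1 = γ1 * a1 k + β1 := by
      rw [← pay_vertex uL k j1, h1 _ (vertex_mem k), dot_vertex]
    have e2 : uL k' j1 = γ1 * a1 k' + β1 := by
      rw [← pay_vertex uL k' j1, h1 _ (vertex_mem k'), dot_vertex]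
    rw [e1, e2] at h
    have : γ1 * a1 k = γ1 * a1 k' := by linarith
    exact mul_left_cancel₀ (ne_of_gt hγ1) this
  obtain ⟨x, hx, hx2, hx1⟩ := keyA uL j1 j2 hM i hdomle hdomlt i1 hi1' r hr' hcol
  obtain ⟨y, hy, hy2⟩ := keyB hm uL j1 j2 hM hmin i hdomle hdomlt i1 hi1'
  set M := Mval uL {j1, j2} with hMdef
  set ε := min ((M - pay uL x j1) / γ1) ((M - pay uL y j2) / γ2) with hεdef
  have hε0 : 0 < ε := lt_min (div_pos (by linarith) hγ1) (div_pos (by linarith) hγ2)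
  -- dot facts
  have hdx2 : (M - β2) / γ2 ≤ dot a2 x := by
    rw [div_le_iff₀ hγ2]
    have h2' := h2 x hx
    nlinarith
  have hdx1 : dot a1 x ≤ (M - β1) / γ1 - ε := by
    have hεγ : ε * γ1 ≤ M - pay uL x j1 := (le_div_iff₀ hγ1).mp (min_le_left _ _)
    have h1' := h1 x hx
    rw [le_sub_iff_add_le, le_div_iff₀ hγ1]
    nlinarith
  have hdy2 : dot a2 y ≤ (M - β2) / γ2 - ε := by
    have hεγ : ε * γ2 ≤ M - pay uL y j2 := (le_div_iff₀ hγ2).mp (min_le_right _ _)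
    have h2' := h2 y hy
    rw [le_sub_iff_add_le, le_div_iff₀ hγ2]
    nlinarith
  refine ⟨ε, hε0, ⟨x, hx, hdx2, hdx1⟩, ⟨y, hy, hdy2⟩, ?_⟩
  intro d1 hd1l _ d2 hd2l hd2r
  exact ⟨⟨x, hx, le_trans hd2r hdx2, le_trans hdx1 hd1l⟩, ⟨y, hy, le_trans hdy2 hd2l⟩⟩
end
end
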